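/- Let 𝒜 be an artinian abelian category (every object satisfies the descending chain condition on subobjects) and let ℱ be a torsion-free class in 𝒜. Then ℱ is a strong torsion-free class: setting 𝒯 = {T ∈ 𝒜 : Hom(T, F) = 0 for all F ∈ ℱ}, the pair (𝒯, ℱ) is a torsion pair, i.e., every object X of 𝒜 fits into a short exact sequence 0 → T → X → F → 0 with T ∈ 𝒯 and F ∈ ℱ. -/

import Mathlib

universe v u

open CategoryTheory CategoryTheory.Limits

section Defs

variable (A : Type u) [Category.{v} A] [Abelian A]

/-- A class of objects is closed under isomorphisms. -/
def IsoClosed (C : Set A) : Prop := ∀ X Y : A, (X ≅ Y) → X ∈ C → Y ∈ C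

/-- A class of objects contains the zero object(s). -/
def ContainsZero (C : Set A) : Prop := ∀ X : A, IsZero X → X ∈ C

/-- A class of objects is closed under quotients: for every epimorphism `C ↠ X`
with `C` in the class, `X` is in the class. -/
def QuotientsClosed (C : Set A) : Prop :=
  ∀ (X Y : A) (f : X ⟶ Y), Epi f → X ∈ C → Y ∈ C

/-- A class of objects is closed under subobjects: for every monomorphism `X ↪ C`
with `C` in the class, `X` is in the class. -/
def SubobjectsClosed (C : Set A) : Prop :=
  ∀ (X Y : A) (f : X ⟶ Y), Mono f → Y ∈ C → X ∈ C

/-- A class of objects is closed under images: for every morphism `f : C₁ ⟶ C₂` with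
`C₁, C₂` in the class, the image of `f` is in the class. -/
def ImagesClosed (C : Set A) : Prop :=
  ∀ (X Y : A) (f : X ⟶ Y), X ∈ C → Y ∈ C → image f ∈ C

/-- A class of objects is closed under extensions: for every short exact sequence
`0 → L → M → N → 0` with `L, N` in the class, `M` is in the class. -/
def ExtClosed (C : Set A) : Prop :=
  ∀ S : ShortComplex A, S.ShortExact → S.X₁ ∈ C → S.X₃ ∈ C → S.X₂ ∈ C

/-- A torsion class: a subcategory closed under quotients and extensions. -/
def IsTorsionClass (C : Set A) : Prop :=
  IsoClosed A C ∧ ContainsZero A C ∧ QuotientsClosed A C ∧ ExtClosed A C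

/-- A torsion-free class: a subcategory closed under subobjects and extensions. -/
def IsTorsionFreeClass (C : Set A) : Prop :=
  IsoClosed A C ∧ ContainsZero A C ∧ SubobjectsClosed A C ∧ ExtClosed A C

/-- `Fac C`: the class of objects admitting an epimorphism from an object of `C`. -/
def Fac (C : Set A) : Set A := {X | ∃ (C₀ : A) (f : C₀ ⟶ X), C₀ ∈ C ∧ Epi f}

/-- `Sub C`: the class of objects admitting a monomorphism into an object of `C`. -/
def Subs (C : Set A) : Set A := {X | ∃ (C₀ : A) (f : X ⟶ C₀), C₀ ∈ C ∧ Mono f}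

/-- `Filt D`: the class of objects admitting a finite filtration
`0 = X₀ ≤ X₁ ≤ ⋯ ≤ Xₙ = X` whose subquotients `Xᵢ/Xᵢ₋₁` all belong to `D`.
Equivalently (inductively): `X` is zero, or `X` is an extension of an object of `D`
by an object of `Filt D`. -/
inductive Filt (D : Set A) : A → Prop
  | zero (X : A) : IsZero X → Filt D X
  | ext (S : ShortComplex A) : S.ShortExact → Filt D S.X₁ → S.X₃ ∈ D → Filt D S.X₂

end Defs

section Aux

open CategoryTheory.Abelian CategoryTheory.Abelian.Pseudoelement

attribute [local instance] CategoryTheory.Abelian.Pseudoelement.homToFun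
  CategoryTheory.Abelian.Pseudoelement.objectToSort

variable {B : Type u} [Category.{v} B] [Abelian B]

/-- The canonical map `coker a ⟶ coker (a ≫ b)`. -/
noncomputable def cokerToCoker {K T X : B} (a : K ⟶ T) (b : T ⟶ X) :
    cokernel a ⟶ cokernel (a ≫ b) :=
  cokernel.desc a (b ≫ cokernel.π (a ≫ b)) (by rw [← Category.assoc, cokernel.condition])

/-- The canonical map `coker (a ≫ b) ⟶ coker b`. -/
noncomputable def cokerToCoker' {K T X : B} (a : K ⟶ T) (b : T ⟶ X) :
    cokernel (a ≫ b) ⟶ cokernel b :=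
  cokernel.desc (a ≫ b) (cokernel.π b) (by rw [Category.assoc, cokernel.condition, comp_zero])

@[simp] lemma pi_cokerToCoker {K T X : B} (a : K ⟶ T) (b : T ⟶ X) :
    cokernel.π a ≫ cokerToCoker a b = b ≫ cokernel.π (a ≫ b) :=
  cokernel.π_desc _ _ _

@[simp] lemma pi_cokerToCoker' {K T X : B} (a : K ⟶ T) (b : T ⟶ X) :
    cokernel.π (a ≫ b) ≫ cokerToCoker' a b = cokernel.π b :=
  cokernel.π_desc _ _ _

lemma cokerSeq_zero {K T X : B} (a : K ⟶ T) (b : T ⟶ X) :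
    cokerToCoker a b ≫ cokerToCoker' a b = 0 := by
  rw [← cancel_epi (cokernel.π a), ← Category.assoc, pi_cokerToCoker, Category.assoc,
    pi_cokerToCoker', cokernel.condition, comp_zero]

lemma exact_self_cokernel {P Q : B} (f : P ⟶ Q) :
    (ShortComplex.mk f (cokernel.π f) (cokernel.condition f)).Exact :=
  ShortComplex.exact_of_g_is_cokernel _ (cokernelIsCokernel f)

/-- For composable monos `a`, `b`, the sequence
`0 → coker a → coker (a ≫ b) → coker b → 0` is short exact. -/
lemma cokerSeq_shortExact {K T X : B} (a : K ⟶ T) (b : T ⟶ X) [Mono b] :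
    (ShortComplex.mk (cokerToCoker a b) (cokerToCoker' a b) (cokerSeq_zero a b)).ShortExact := by
  haveI hmono : Mono (cokerToCoker a b) := by
    apply mono_of_zero_of_map_zero
    intro x hx
    obtain ⟨t, rfl⟩ := pseudo_surjective_of_epi (cokernel.π a) x
    have h1 : (cokernel.π (a ≫ b)) (b t) = 0 := by
      rw [← Pseudoelement.comp_apply, ← pi_cokerToCoker a b, Pseudoelement.comp_apply]
      exact hx
    obtain ⟨k, hk⟩ := pseudo_exact_of_exact (exact_self_cokernel (a ≫ b)) _ h1
    rw [show (ShortComplex.mk (a ≫ b) (cokernel.π (a ≫ b)) (cokernel.condition _)).f = a ≫ b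
      from rfl, Pseudoelement.comp_apply] at hk
    have hat : a k = t := pseudo_injective_of_mono b hk
    rw [← hat, ← Pseudoelement.comp_apply, cokernel.condition, Pseudoelement.zero_apply]
  haveI hepi : Epi (cokerToCoker' a b) :=
    epi_of_epi_fac (pi_cokerToCoker' a b)
  have hexact : (ShortComplex.mk (cokerToCoker a b) (cokerToCoker' a b)
      (cokerSeq_zero a b)).Exact := by
    apply exact_of_pseudo_exact
    intro y hy
    obtain ⟨x, rfl⟩ := pseudo_surjective_of_epi (cokernel.π (a ≫ b)) y
    have h1 : (cokernel.π b) x = 0 := by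
      rw [← pi_cokerToCoker' a b, Pseudoelement.comp_apply]
      exact hy
    obtain ⟨t, ht⟩ := pseudo_exact_of_exact (exact_self_cokernel b) _ h1
    rw [show (ShortComplex.mk b (cokernel.π b) (cokernel.condition _)).f = b from rfl] at ht
    refine ⟨(cokernel.π a) t, ?_⟩
    rw [← Pseudoelement.comp_apply, pi_cokerToCoker, Pseudoelement.comp_apply, ht]
  exact ⟨hexact⟩

lemma isZero_cokernel_of_epi {P Q : B} (f : P ⟶ Q) [Epi f] : IsZero (cokernel f) := by
  rw [IsZero.iff_id_eq_zero, ← cancel_epi (cokernel.π f)]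
  simp [cokernel.π_of_epi]

end Aux

/-!
STATEMENT 17: Let `𝒜` be an artinian abelian category (every object satisfies DCC on
subobjects) and `ℱ` a torsion-free class in `𝒜`. Then `ℱ` is a strong torsion-free
class: with `𝒯 = {T | Hom(T, F) = 0 for all F ∈ ℱ}`, every object `X` fits into a short
exact sequence `0 → T → X → F → 0` with `T ∈ 𝒯` and `F ∈ ℱ`.
-/

theorem torsionFree_class_is_strong_of_artinian
    (A : Type u) [Category.{v} A] [Abelian A]
    (hart : ∀ X : A, WellFoundedLT (Subobject X))
    (F : Set A) (hF : IsTorsionFreeClass A F) :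
    ∀ X : A, ∃ S : ShortComplex A, S.ShortExact ∧
      (∀ F₀ ∈ F, ∀ f : S.X₁ ⟶ F₀, f = 0) ∧ S.X₃ ∈ F ∧ Nonempty (S.X₂ ≅ X) := by
  obtain ⟨hiso, hzero, hsub, hext⟩ := hF
  intro X
  have htop : (⊤ : Subobject X) ∈ {T : Subobject X | cokernel T.arrow ∈ F} :=
    hzero _ (_root_.isZero_cokernel_of_epi (⊤ : Subobject X).arrow)
  haveI := hart X
  obtain ⟨T, hT, hmin⟩ := (IsWellFounded.wf :
    WellFounded ((· < ·) : Subobject X → Subobject X → Prop)).has_min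
    {T : Subobject X | cokernel T.arrow ∈ F} ⟨⊤, htop⟩
  refine ⟨ShortComplex.mk T.arrow (cokernel.π T.arrow) (cokernel.condition _),
    ⟨ShortComplex.exact_of_g_is_cokernel _ (cokernelIsCokernel _)⟩, ?_, hT, ⟨Iso.refl X⟩⟩
  intro F₀ hF₀ f
  by_contra hf
  haveI hm : Mono (kernel.ι f ≫ T.arrow) := mono_comp _ _
  -- the kernel of `f`, as a subobject of `X`, is strictly smaller than `T`
  have hKT : Subobject.mk (kernel.ι f ≫ T.arrow) ≤ T := by
    have h := Subobject.mk_le_mk_of_comm (f₁ := kernel.ι f ≫ T.arrow) (f₂ := T.arrow)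
      (kernel.ι f) rfl
    rwa [Subobject.mk_arrow] at h
  have hKlt : Subobject.mk (kernel.ι f ≫ T.arrow) < T := by
    refine lt_of_le_of_ne hKT ?_
    intro h
    apply hf
    have h' : Subobject.mk (kernel.ι f ≫ T.arrow) = Subobject.mk T.arrow := by
      rw [Subobject.mk_arrow]; exact h
    have he : Subobject.ofMkLEMk (kernel.ι f ≫ T.arrow) T.arrow h'.le ≫ T.arrow =
        kernel.ι f ≫ T.arrow := Subobject.ofMkLEMk_comp h'.le
    have hek : Subobject.ofMkLEMk (kernel.ι f ≫ T.arrow) T.arrow h'.le = kernel.ι f :=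
      (cancel_mono T.arrow).1 he
    haveI : IsIso (Subobject.ofMkLEMk (kernel.ι f ≫ T.arrow) T.arrow h'.le) :=
      (Subobject.isoOfMkEqMk (kernel.ι f ≫ T.arrow) T.arrow h').isIso_hom
    haveI : IsIso (kernel.ι f) := hek ▸ this
    rw [← cancel_epi (kernel.ι f), kernel.condition, comp_zero]
  -- `T / ker f ≅ coimage f ≅ image f` lies in `F`
  have him : Abelian.image f ∈ F := hsub _ _ (Abelian.image.ι f) inferInstance hF₀
  have hcoim : cokernel (kernel.ι f) ∈ F :=
    hiso _ _ (Abelian.coimageIsoImage f).symm him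
  -- hence `X / ker f` lies in `F` by extension closure
  have hXK : cokernel (kernel.ι f ≫ T.arrow) ∈ F :=
    hext _ (cokerSeq_shortExact (kernel.ι f) T.arrow) hcoim hT
  -- transfer along the iso `coker (mk _).arrow ≅ coker (kernel.ι f ≫ T.arrow)`
  have hKmem : Subobject.mk (kernel.ι f ≫ T.arrow) ∈ {T : Subobject X | cokernel T.arrow ∈ F} := by
    show cokernel (Subobject.mk (kernel.ι f ≫ T.arrow)).arrow ∈ F
    rw [← Subobject.underlyingIso_hom_comp_eq_mk]
    exact hiso _ _
      (cokernelEpiComp (Subobject.underlyingIso (kernel.ι f ≫ T.arrow)).hom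
        (kernel.ι f ≫ T.arrow)).symm hXK
  exact hmin _ hKmem hKlt
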